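/- arXiv:2104.04729 — 5 statements merged into one kernel-verified Lean document; each statement's English description precedes it below -/
import Mathlib

section
/- (Proposition 2) If t ∈ [0,T) and 0 < y < P·e^{−μ(T−t)}, then V(t,y) > G(t,y); that is, if the price of the carbon emission right at time t is below P·e^{−μ(T−t)}, it is not optimal to stop (the enterprise maintains production). -/
open MeasureTheory ProbabilityTheory

/-- A standard Brownian motion with respect to the filtration `ℱ` under the probability
measure `Pr`: it starts at `0` a.s., has a.s. continuous paths, is adapted, and for
`0 ≤ u ≤ s` the increment `B s - B u` is independent of `ℱ u` and Gaussian with mean `0`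
and variance `s - u`. -/
structure IsStandardBM {Ω : Type*} {mΩ : MeasurableSpace Ω}
    (Pr : Measure Ω) (ℱ : Filtration ℝ mΩ) (B : ℝ → Ω → ℝ) : Prop where
  zero : ∀ᵐ ω ∂Pr, B 0 ω = 0
  cont : ∀ᵐ ω ∂Pr, Continuous fun s => B s ω
  adapted : Adapted ℱ B
  indep : ∀ u s : ℝ, 0 ≤ u → u ≤ s →
    Indep (MeasurableSpace.comap (fun ω => B s ω - B u ω) Real.measurableSpace) (ℱ u) Pr
  gauss : ∀ u s : ℝ, 0 ≤ u → u ≤ s →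
    Pr.map (fun ω => B s ω - B u ω) = gaussianReal 0 (Real.toNNReal (s - u))

/-- `G t y`: the expected reward from stopping immediately at time `t` when the price is `y`. -/
noncomputable def G (M P μ T t y : ℝ) : ℝ :=
  M * P * t + M * y * Real.exp (μ * (T - t)) * (T - t)

/-- `V t y`: the value function, the supremum of expected rewards `E[R^{t,y}(τ)]` over all
stopping times `τ` of the filtration `ℱ` with `t ≤ τ ≤ T` almost surely, where
`R^{t,y}(τ) = M·P·τ + M·Y_T^{t,y}·(T − τ)` and
`Y_T^{t,y} = y·exp((μ − σ²/2)(T − t) + σ(B_T − B_t))`. -/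
noncomputable def V {Ω : Type*} {mΩ : MeasurableSpace Ω}
    (Pr : Measure Ω) (ℱ : Filtration ℝ mΩ) (B : ℝ → Ω → ℝ)
    (M P σ μ T t y : ℝ) : ℝ :=
  sSup {x : ℝ | ∃ τ : Ω → ℝ, IsStoppingTime ℱ (fun ω => (τ ω : WithTop ℝ)) ∧
    (∀ᵐ ω ∂Pr, t ≤ τ ω ∧ τ ω ≤ T) ∧
    x = ∫ ω, (M * P * τ ω +
      M * (y * Real.exp ((μ - σ ^ 2 / 2) * (T - t) + σ * (B T ω - B t ω))) * (T - τ ω)) ∂Pr}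


lemma my_integrable_exp_gaussian (c : ℝ) {v : NNReal} (hv : v ≠ 0) :
    Integrable (fun x => Real.exp (c * x)) (gaussianReal 0 v) := by
  have hv' : (0:ℝ) < (v:ℝ) := lt_of_le_of_ne v.coe_nonneg (by exact_mod_cast hv.symm)
  rw [gaussianReal_of_var_ne_zero _ hv,
    integrable_withDensity_iff (measurable_gaussianPDF _ _)
      (Filter.Eventually.of_forall fun x => ENNReal.ofReal_lt_top)]
  have heq : (fun x => Real.exp (c * x) * (gaussianPDF 0 v x).toReal)
      = fun x => Real.exp (c ^ 2 * v / 2) * gaussianPDFReal (c * v) v x := by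
    ext x
    rw [gaussianPDF, ENNReal.toReal_ofReal (gaussianPDFReal_nonneg _ _ _)]
    unfold gaussianPDFReal
    rw [show Real.exp (c*x) * ((Real.sqrt (2*Real.pi*v))⁻¹ * Real.exp (-(x-0)^2/(2*v)))
        = (Real.sqrt (2*Real.pi*v))⁻¹ * (Real.exp (c*x) * Real.exp (-(x-0)^2/(2*v))) by ring,
      ← Real.exp_add,
      show Real.exp (c^2*v/2) * ((Real.sqrt (2*Real.pi*v))⁻¹ * Real.exp (-(x-(c*v))^2/(2*v)))
        = (Real.sqrt (2*Real.pi*v))⁻¹ * (Real.exp (c^2*v/2) * Real.exp (-(x-(c*v))^2/(2*v))) by ring,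
      ← Real.exp_add]
    congr 1
    field_simp
    ring
  rw [heq]
  exact (integrable_gaussianPDFReal _ _).const_mul _

theorem stmt_3 {Ω : Type*} {mΩ : MeasurableSpace Ω}
    (Pr : Measure Ω) [IsProbabilityMeasure Pr] (ℱ : Filtration ℝ mΩ) (B : ℝ → Ω → ℝ)
    (hB : IsStandardBM Pr ℱ B)
    (T M P σ μ : ℝ) (hT : 0 < T) (hM : 0 < M) (hP : 0 < P) (hσ : 0 < σ)
    (t y : ℝ) (ht : t ∈ Set.Ico 0 T) (hy0 : 0 < y)
    (hy : y < P * Real.exp (-μ * (T - t))) :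
    G M P μ T t y < V Pr ℱ B M P σ μ T t y := by
  obtain ⟨ht0, htT⟩ := ht
  set Yf : Ω → ℝ := fun ω => y * Real.exp ((μ - σ ^ 2 / 2) * (T - t) + σ * (B T ω - B t ω))
    with hYfdef
  set S : Set ℝ := {x : ℝ | ∃ τ : Ω → ℝ, IsStoppingTime ℱ (fun ω => (τ ω : WithTop ℝ)) ∧
    (∀ᵐ ω ∂Pr, t ≤ τ ω ∧ τ ω ≤ T) ∧
    x = ∫ ω, (M * P * τ ω + M * Yf ω * (T - τ ω)) ∂Pr} with hSdef
  -- Y is integrable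
  have hZ : Measurable fun ω => B T ω - B t ω :=
    (((hB.adapted T)).mono (ℱ.le T) le_rfl).sub
      (((hB.adapted t)).mono (ℱ.le t) le_rfl)
  have hvne : Real.toNNReal (T - t) ≠ 0 := by
    simp only [ne_eq, Real.toNNReal_eq_zero, not_le]
    linarith
  have hexp : Integrable (fun ω => Real.exp (σ * (B T ω - B t ω))) Pr := by
    have h1 : Integrable (fun x => Real.exp (σ * x)) (Pr.map fun ω => B T ω - B t ω) := by
      rw [hB.gauss t T ht0 htT.le]
      exact my_integrable_exp_gaussian σ hvne
    have := (integrable_map_measure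
      ((Real.continuous_exp.comp (continuous_const.mul continuous_id)).aestronglyMeasurable)
      hZ.aemeasurable).mp h1
    exact this
  have hYf : Integrable Yf Pr := by
    have := (hexp.const_mul (y * Real.exp ((μ - σ ^ 2 / 2) * (T - t))))
    refine this.congr (Filter.Eventually.of_forall fun ω => ?_)
    simp [hYfdef, Real.exp_add, mul_assoc]
  have hYfpos : ∀ ω, 0 < Yf ω := fun ω => mul_pos hy0 (Real.exp_pos _)
  have hIY : 0 ≤ ∫ ω, Yf ω ∂Pr := integral_nonneg fun ω => (hYfpos ω).le
  -- S is bounded above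
  have hBdd : BddAbove S := by
    refine ⟨M * P * T + M * T * ∫ ω, Yf ω ∂Pr, fun x hx => ?_⟩
    obtain ⟨τ, hτ, hae, hxe⟩ := hx
    by_cases hfi : Integrable (fun ω => M * P * τ ω + M * Yf ω * (T - τ ω)) Pr
    · have hg : Integrable (fun ω => M * P * T + M * T * Yf ω) Pr :=
        (integrable_const _).add (hYf.const_mul _)
      have hle : x ≤ ∫ ω, (M * P * T + M * T * Yf ω) ∂Pr := by
        rw [hxe]
        refine integral_mono_ae hfi hg ?_
        filter_upwards [hae] with ω ⟨h1, h2⟩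
        have hY := (hYfpos ω).le
        nlinarith [mul_nonneg (mul_nonneg hM.le hP.le) (sub_nonneg.mpr h2),
          mul_nonneg (mul_nonneg hM.le hY) (ht0.trans h1)]
      calc x ≤ ∫ ω, (M * P * T + M * T * Yf ω) ∂Pr := hle
        _ = M * P * T + M * T * ∫ ω, Yf ω ∂Pr := by
            rw [integral_add (integrable_const _) (hYf.const_mul _), integral_const,
              integral_const_mul]
            simp
    · rw [hxe, integral_undef hfi]
      positivity
  -- M * P * T is in S
  have hmem : M * P * T ∈ S := by
    refine ⟨fun _ => T, isStoppingTime_const ℱ T, Filter.Eventually.of_forall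
      fun ω => ⟨htT.le, le_rfl⟩, ?_⟩
    simp [integral_const]
  -- G < M * P * T
  have hGlt : G M P μ T t y < M * P * T := by
    have h1 : Real.exp (-μ * (T - t)) * Real.exp (μ * (T - t)) = 1 := by
      rw [← Real.exp_add]
      ring_nf
      exact Real.exp_zero
    have h2 : y * Real.exp (μ * (T - t)) < P := by
      have := mul_lt_mul_of_pos_right hy (Real.exp_pos (μ * (T - t)))
      rwa [mul_assoc, h1, mul_one] at this
    have h3 := mul_lt_mul_of_pos_left h2 (mul_pos hM (sub_pos.mpr htT))
    unfold G
    nlinarith [h3]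
  exact lt_of_lt_of_le hGlt (le_csSup hBdd hmem)
end

section
/- Define the free boundary b(t) := inf {y ∈ (0,∞) : V(t,y) = G(t,y)} (an infimum in the extended reals, equal to +∞ if the set is empty). Then for every t ∈ [0,T), b(t) ≥ P·e^{−μ(T−t)}; i.e., the lower bound curve y = P·e^{−μ(T−t)} lies below the free boundary. -/
open MeasureTheory ProbabilityTheory

/-- The free boundary `b(t)`: the infimum (in the extended reals, so `+∞` if the set is
empty) of the prices `y > 0` at which stopping is optimal, i.e. `V(t,y) = G(t,y)`. -/
noncomputable def freeBoundary {Ω : Type*} {mΩ : MeasurableSpace Ω}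
    (Pr : Measure Ω) (ℱ : Filtration ℝ mΩ) (B : ℝ → Ω → ℝ)
    (M P σ μ T t : ℝ) : EReal :=
  sInf {z : EReal | ∃ y : ℝ, 0 < y ∧ V Pr ℱ B M P σ μ T t y = G M P μ T t y ∧ z = (y : EReal)}

open scoped NNReal in
lemma integrable_exp_mul_gaussianReal_aux (c : ℝ) {v : ℝ≥0} (hv : v ≠ 0) :
    MeasureTheory.Integrable (fun x : ℝ => Real.exp (c * x)) (gaussianReal 0 v) := by
  rw [gaussianReal_of_var_ne_zero _ hv]
  rw [integrable_withDensity_iff (measurable_gaussianPDF _ _)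
    (Filter.Eventually.of_forall fun x => ENNReal.ofReal_lt_top)]
  have hv0 : (0 : ℝ) < (v : ℝ) := by positivity
  have hb : (0 : ℝ) < 1 / (2 * (v : ℝ)) := by positivity
  have h1 : MeasureTheory.Integrable
      (fun x : ℝ => Real.exp (-(1 / (2 * (v : ℝ))) * (x - c * v) ^ 2)) := by
    exact (integrable_exp_neg_mul_sq hb).comp_sub_right (c * v)
  have h2 := (h1.const_mul ((Real.sqrt (2 * Real.pi * v))⁻¹ * Real.exp (c ^ 2 * v / 2)))
  refine h2.congr ?_
  refine Filter.Eventually.of_forall fun x => ?_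
  simp only [gaussianPDF, ENNReal.toReal_ofReal (gaussianPDFReal_nonneg 0 v x)]
  unfold gaussianPDFReal
  rw [mul_assoc, ← Real.exp_add, mul_comm (Real.exp (c * x)), mul_assoc, mul_assoc, ← Real.exp_add]
  congr 1
  field_simp
  ring

theorem stmt_4 {Ω : Type*} {mΩ : MeasurableSpace Ω}
    (Pr : Measure Ω) [IsProbabilityMeasure Pr] (ℱ : Filtration ℝ mΩ) (B : ℝ → Ω → ℝ)
    (hB : IsStandardBM Pr ℱ B)
    (T M P σ μ : ℝ) (hT : 0 < T) (hM : 0 < M) (hP : 0 < P) (hσ : 0 < σ)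
    (t : ℝ) (ht : t ∈ Set.Ico 0 T) :
    ((P * Real.exp (-μ * (T - t)) : ℝ) : EReal)
      ≤ freeBoundary Pr ℱ B M P σ μ T t := by
  obtain ⟨ht0, htT⟩ := ht
  apply le_sInf
  rintro z ⟨y, hy, hVG, rfl⟩
  rw [EReal.coe_le_coe_iff]
  by_contra hlt
  push_neg at hlt
  -- measurability facts
  have hBmeas : ∀ s : ℝ, Measurable (B s) := fun s =>
    (hB.adapted s).mono (ℱ.le s) le_rfl
  have hfm : Measurable (fun ω => B T ω - B t ω) := (hBmeas T).sub (hBmeas t)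
  -- law of the increment
  have hmap : Pr.map (fun ω => B T ω - B t ω)
      = gaussianReal 0 (Real.toNNReal (T - t)) := hB.gauss t T ht0 htT.le
  have hvne : Real.toNNReal (T - t) ≠ 0 := by
    simp only [ne_eq, Real.toNNReal_eq_zero, not_le]
    linarith
  -- integrability of exp(σ (B_T - B_t))
  have hexpInt : MeasureTheory.Integrable
      (fun ω => Real.exp (σ * (B T ω - B t ω))) Pr := by
    have h0 := integrable_exp_mul_gaussianReal_aux σ hvne
    rw [← hmap] at h0
    have h0' : MeasureTheory.Integrable
        ((fun x : ℝ => Real.exp (σ * x)) ∘ (fun ω => B T ω - B t ω)) Pr :=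
      (MeasureTheory.integrable_map_measure (μ := Pr) (f := fun ω => B T ω - B t ω)
        (g := fun x : ℝ => Real.exp (σ * x))
        ((Real.measurable_exp.comp (measurable_id.const_mul σ)).aestronglyMeasurable)
        hfm.aemeasurable).mp h0
    exact h0'
  set Y : Ω → ℝ :=
    fun ω => y * Real.exp ((μ - σ ^ 2 / 2) * (T - t) + σ * (B T ω - B t ω)) with hYdef
  have hYmeas : Measurable Y := by
    apply Measurable.const_mul
    exact (Real.continuous_exp.measurable).comp ((measurable_const.add (hfm.const_mul σ)))
  have hYpos : ∀ ω, 0 < Y ω := fun ω => by positivity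
  have hYint : MeasureTheory.Integrable Y Pr := by
    have : Y = fun ω => (y * Real.exp ((μ - σ ^ 2 / 2) * (T - t))) *
        Real.exp (σ * (B T ω - B t ω)) := by
      funext ω; simp only [hYdef]; rw [Real.exp_add]; ring
    rw [this]
    exact hexpInt.const_mul _
  -- the dominating function
  set g : Ω → ℝ := fun ω => M * P * T + M * T * Y ω with hgdef
  have hgInt : MeasureTheory.Integrable g Pr :=
    (MeasureTheory.integrable_const _).add ((hYint.const_mul (M * T)))
  -- the set defining V is bounded above
  have hbdd : BddAbove {x : ℝ | ∃ τ : Ω → ℝ, IsStoppingTime ℱ (fun ω => (τ ω : WithTop ℝ)) ∧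
      (∀ᵐ ω ∂Pr, t ≤ τ ω ∧ τ ω ≤ T) ∧
      x = ∫ ω, (M * P * τ ω + M * Y ω * (T - τ ω)) ∂Pr} := by
    refine ⟨∫ ω, g ω ∂Pr, ?_⟩
    rintro x ⟨τ, hτ, hae, rfl⟩
    have hτmeas : Measurable τ := by
      apply measurable_of_Iic
      intro i
      have hτi := hτ i
      simp only [WithTop.coe_le_coe] at hτi
      exact ℱ.le i _ hτi
    have hfmeas : MeasureTheory.AEStronglyMeasurable
        (fun ω => M * P * τ ω + M * Y ω * (T - τ ω)) Pr := by
      apply Measurable.aestronglyMeasurable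
      exact ((hτmeas.const_mul (M * P))).add ((hYmeas.const_mul M).mul
        (measurable_const.sub hτmeas))
    have hbound : ∀ᵐ ω ∂Pr, ‖M * P * τ ω + M * Y ω * (T - τ ω)‖ ≤ g ω := by
      filter_upwards [hae] with ω hω
      obtain ⟨h1, h2⟩ := hω
      have hτ0 : 0 ≤ τ ω := le_trans ht0 h1
      have hY := hYpos ω
      have n1 : 0 ≤ M * P * τ ω := by positivity
      have n2 : 0 ≤ M * Y ω * (T - τ ω) := mul_nonneg (by positivity) (by linarith)
      rw [Real.norm_eq_abs, abs_of_nonneg (by linarith)]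
      simp only [hgdef]
      have e1 : M * P * τ ω ≤ M * P * T := mul_le_mul_of_nonneg_left h2 (by positivity)
      have e2 : M * Y ω * (T - τ ω) ≤ M * T * Y ω := by
        nlinarith [mul_nonneg (mul_nonneg hM.le hY.le) hτ0]
      linarith
    have hfInt : MeasureTheory.Integrable
        (fun ω => M * P * τ ω + M * Y ω * (T - τ ω)) Pr :=
      hgInt.mono' hfmeas hbound
    refine MeasureTheory.integral_mono_ae hfInt hgInt ?_
    filter_upwards [hbound] with ω hω
    exact le_trans (le_abs_self _) hω
  -- V ≥ M * P * T via the constant stopping time T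
  have hmem : M * P * T ∈ {x : ℝ | ∃ τ : Ω → ℝ, IsStoppingTime ℱ (fun ω => (τ ω : WithTop ℝ)) ∧
      (∀ᵐ ω ∂Pr, t ≤ τ ω ∧ τ ω ≤ T) ∧
      x = ∫ ω, (M * P * τ ω + M * Y ω * (T - τ ω)) ∂Pr} := by
    refine ⟨fun _ => T, isStoppingTime_const ℱ T,
      Filter.Eventually.of_forall fun ω => ⟨htT.le, le_refl T⟩, ?_⟩
    simp [MeasureTheory.integral_const]
  have hV : M * P * T ≤ V Pr ℱ B M P σ μ T t y := by
    rw [V]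
    exact le_csSup hbdd hmem
  -- G < M * P * T
  have hexp : y * Real.exp (μ * (T - t)) < P := by
    have h2 : (0 : ℝ) < Real.exp (μ * (T - t)) := Real.exp_pos _
    have h1 : P * Real.exp (-μ * (T - t)) = P / Real.exp (μ * (T - t)) := by
      rw [div_eq_mul_inv, ← Real.exp_neg]; ring_nf
    rw [h1, lt_div_iff₀ h2] at hlt
    linarith
  have hG : G M P μ T t y < M * P * T := by
    rw [G]
    have h3 : (0 : ℝ) < T - t := by linarith
    nlinarith [mul_lt_mul_of_pos_left hexp (mul_pos hM h3)]
  rw [hVG] at hV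
  linarith
end

section
/- (Proposition 1) For every fixed t ∈ [0,T], if V(t,y) = G(t,y) for some y > 0, then V(t,y') = G(t,y') for every y' ≥ y; that is, if stopping is optimal at price y at time t, then stopping is optimal at any higher price y' at time t (the section of the stopping set D = {(t,y) : V(t,y) = G(t,y)} at each time t is an upper set in y). -/
open MeasureTheory ProbabilityTheory Real
open scoped NNReal ENNReal

lemma exp_mul_pdf (c : ℝ) {v : ℝ≥0} (hv : v ≠ 0) (x : ℝ) :
    Real.exp (c * x) * gaussianPDFReal 0 v x
      = Real.exp (c ^ 2 * v / 2) * gaussianPDFReal (c * v) v x := by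
  have hv' : (v : ℝ) ≠ 0 := by exact_mod_cast hv
  simp only [gaussianPDFReal]
  have key : c * x + -(x - 0) ^ 2 / (2 * (v : ℝ))
      = c ^ 2 * v / 2 + -(x - c * v) ^ 2 / (2 * (v : ℝ)) := by
    field_simp
    ring
  calc Real.exp (c * x) * ((√(2 * π * v))⁻¹ * rexp (-(x - 0) ^ 2 / (2 * v)))
      = (√(2 * π * v))⁻¹ * rexp (c * x + -(x - 0) ^ 2 / (2 * v)) := by
        rw [Real.exp_add]; ring
    _ = (√(2 * π * v))⁻¹ * rexp (c ^ 2 * v / 2 + -(x - c * v) ^ 2 / (2 * v)) := by rw [key]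
    _ = Real.exp (c ^ 2 * v / 2) * ((√(2 * π * v))⁻¹ * rexp (-(x - c * v) ^ 2 / (2 * v))) := by
        rw [Real.exp_add]; ring

lemma integrable_exp_gauss (c : ℝ) (v : ℝ≥0) :
    Integrable (fun x => Real.exp (c * x)) (gaussianReal 0 v) := by
  by_cases hv : v = 0
  · subst hv
    rw [gaussianReal_zero_var]
    refine (integrable_const (Real.exp (c * 0))).congr ?_
    rw [ae_dirac_eq]
    exact Filter.eventually_pure.mpr (by simp)
  · rw [gaussianReal_of_var_ne_zero _ hv]
    rw [integrable_withDensity_iff (measurable_gaussianPDF _ _)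
      (ae_of_all _ fun x => ENNReal.ofReal_lt_top)]
    have : (fun x => Real.exp (c * x) * (gaussianPDF 0 v x).toReal)
        = fun x => Real.exp (c ^ 2 * v / 2) * gaussianPDFReal (c * v) v x := by
      funext x
      rw [gaussianPDF, ENNReal.toReal_ofReal (gaussianPDFReal_nonneg _ _ _), exp_mul_pdf c hv]
    rw [this]
    exact (integrable_gaussianPDFReal _ _).const_mul _

lemma integral_exp_gauss (c : ℝ) (v : ℝ≥0) :
    ∫ x, Real.exp (c * x) ∂(gaussianReal 0 v) = Real.exp (c ^ 2 * v / 2) := by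
  by_cases hv : v = 0
  · subst hv
    rw [gaussianReal_zero_var, integral_dirac]
    simp
  · rw [gaussianReal_of_var_ne_zero _ hv]
    have hrw : gaussianPDF 0 v
        = fun x => ((Real.toNNReal (gaussianPDFReal 0 v x) : ℝ≥0) : ℝ≥0∞) := by
      funext x; rfl
    rw [hrw, integral_withDensity_eq_integral_smul
      ((measurable_gaussianPDFReal 0 v).real_toNNReal)]
    have : (fun x => Real.toNNReal (gaussianPDFReal 0 v x) • Real.exp (c * x))
        = fun x => Real.exp (c ^ 2 * v / 2) * gaussianPDFReal (c * v) v x := by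
      funext x
      rw [NNReal.smul_def, Real.coe_toNNReal _ (gaussianPDFReal_nonneg _ _ _), smul_eq_mul,
        mul_comm (gaussianPDFReal 0 v x), exp_mul_pdf c hv]
    rw [this, integral_const_mul, integral_gaussianPDFReal_eq_one _ hv, mul_one]

theorem stmt_5 {Ω : Type*} {mΩ : MeasurableSpace Ω}
    (Pr : Measure Ω) [IsProbabilityMeasure Pr] (ℱ : Filtration ℝ mΩ) (B : ℝ → Ω → ℝ)
    (hB : IsStandardBM Pr ℱ B)
    (T M P σ μ : ℝ) (hT : 0 < T) (hM : 0 < M) (hP : 0 < P) (hσ : 0 < σ)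
    (t : ℝ) (ht : t ∈ Set.Icc 0 T) (y y' : ℝ) (hy : 0 < y) (hyy' : y ≤ y')
    (hstop : V Pr ℱ B M P σ μ T t y = G M P μ T t y) :
    V Pr ℱ B M P σ μ T t y' = G M P μ T t y' := by
  obtain ⟨ht0, htT⟩ := ht
  have hTt : (0 : ℝ) ≤ T - t := by linarith
  have hvT : ((Real.toNNReal (T - t) : ℝ≥0) : ℝ) = T - t := Real.coe_toNNReal _ hTt
  have hfmeas : Measurable (fun ω => B T ω - B t ω) :=
    ((hB.adapted T).mono (ℱ.le T) le_rfl).sub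
      ((hB.adapted t).mono (ℱ.le t) le_rfl)
  have hmap : Pr.map (fun ω => B T ω - B t ω) = gaussianReal 0 (Real.toNNReal (T - t)) :=
    hB.gauss t T ht0 htT
  have hgm : Measurable (fun x : ℝ => Real.exp (σ * x)) :=
    Real.measurable_exp.comp (measurable_id.const_mul σ)
  -- integrability and value of exp(σ (B_T - B_t))
  have hexpint : Integrable (fun ω => Real.exp (σ * (B T ω - B t ω))) Pr := by
    have h1 : Integrable (fun x => Real.exp (σ * x)) (Pr.map (fun ω => B T ω - B t ω)) := by
      rw [hmap]; exact integrable_exp_gauss σ _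
    exact (integrable_map_measure hgm.aestronglyMeasurable hfmeas.aemeasurable).mp h1
  have hexpval : ∫ ω, Real.exp (σ * (B T ω - B t ω)) ∂Pr
      = Real.exp (σ ^ 2 * (Real.toNNReal (T - t)) / 2) := by
    rw [← integral_map hfmeas.aemeasurable hgm.aestronglyMeasurable, hmap, integral_exp_gauss]
  have hEmeas : Measurable
      (fun ω => Real.exp ((μ - σ ^ 2 / 2) * (T - t) + σ * (B T ω - B t ω))) :=
    Real.measurable_exp.comp (measurable_const.add (hfmeas.const_mul σ))
  have hEint : Integrable
      (fun ω => Real.exp ((μ - σ ^ 2 / 2) * (T - t) + σ * (B T ω - B t ω))) Pr := by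
    simp_rw [Real.exp_add]
    exact hexpint.const_mul _
  have hEval : ∫ ω, Real.exp ((μ - σ ^ 2 / 2) * (T - t) + σ * (B T ω - B t ω)) ∂Pr
      = Real.exp (μ * (T - t)) := by
    simp_rw [Real.exp_add]
    rw [integral_const_mul, hexpval, ← Real.exp_add]
    congr 1
    rw [hvT]
    ring
  -- stopping times are measurable
  have hmeasτ : ∀ τ : Ω → ℝ, IsStoppingTime ℱ (fun ω => (τ ω : WithTop ℝ)) → Measurable τ := by
    intro τ hst
    exact measurable_of_Iic fun a => by
      have h := ℱ.le a _ (hst a)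
      convert h using 1
      ext ω
      simp
  -- integrability of the reward
  have hint : ∀ (y0 : ℝ) (τ : Ω → ℝ), 0 ≤ y0 → Measurable τ →
      (∀ᵐ ω ∂Pr, t ≤ τ ω ∧ τ ω ≤ T) →
      Integrable (fun ω => M * P * τ ω +
        M * (y0 * Real.exp ((μ - σ ^ 2 / 2) * (T - t) + σ * (B T ω - B t ω))) * (T - τ ω))
        Pr := by
    intro y0 τ hy0 hτm hae
    have hτint : Integrable τ Pr := by
      refine (integrable_const T).mono' hτm.aestronglyMeasurable ?_
      filter_upwards [hae] with ω hω
      rw [Real.norm_eq_abs, abs_le]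
      exact ⟨by linarith [hω.1], hω.2⟩
    refine Integrable.add (hτint.const_mul _) ?_
    refine (hEint.const_mul (M * y0 * (T - t))).mono'
      (((hEmeas.const_mul y0).const_mul M).mul (measurable_const.sub hτm)).aestronglyMeasurable
      ?_
    filter_upwards [hae] with ω hω
    set e := Real.exp ((μ - σ ^ 2 / 2) * (T - t) + σ * (B T ω - B t ω)) with he_def
    have he : (0 : ℝ) ≤ e := (Real.exp_pos _).le
    have h0 : (0 : ℝ) ≤ M * (y0 * e) := mul_nonneg hM.le (mul_nonneg hy0 he)
    rw [Real.norm_eq_abs, abs_of_nonneg (mul_nonneg h0 (by linarith [hω.2]))]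
    calc M * (y0 * e) * (T - τ ω) ≤ M * (y0 * e) * (T - t) :=
          mul_le_mul_of_nonneg_left (by linarith [hω.1]) h0
      _ = M * y0 * (T - t) * e := by ring
  -- value of the reward for the constant stopping time τ = t
  have hval : ∀ y0 : ℝ,
      ∫ ω, (M * P * t +
        M * (y0 * Real.exp ((μ - σ ^ 2 / 2) * (T - t) + σ * (B T ω - B t ω))) * (T - t)) ∂Pr
      = G M P μ T t y0 := by
    intro y0
    have hre : (fun ω => M * P * t +
        M * (y0 * Real.exp ((μ - σ ^ 2 / 2) * (T - t) + σ * (B T ω - B t ω))) * (T - t))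
        = fun ω => M * P * t +
          (M * y0 * (T - t)) * Real.exp ((μ - σ ^ 2 / 2) * (T - t) + σ * (B T ω - B t ω)) := by
      funext ω; ring
    rw [hre, integral_add (integrable_const _) (hEint.const_mul _), integral_const,
      integral_const_mul, hEval]
    simp only [probReal_univ, one_smul, G]
    ring
  -- crude upper bound on every element of the reward set
  have hubcrude : ∀ y0 : ℝ, 0 ≤ y0 → ∀ x ∈ {x : ℝ | ∃ τ : Ω → ℝ, IsStoppingTime ℱ (fun ω => (τ ω : WithTop ℝ)) ∧
      (∀ᵐ ω ∂Pr, t ≤ τ ω ∧ τ ω ≤ T) ∧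
      x = ∫ ω, (M * P * τ ω +
        M * (y0 * Real.exp ((μ - σ ^ 2 / 2) * (T - t) + σ * (B T ω - B t ω))) * (T - τ ω)) ∂Pr},
      x ≤ M * P * T + M * y0 * (T - t) * Real.exp (μ * (T - t)) := by
    rintro y0 hy0 x ⟨τ, hst, hae, rfl⟩
    have hτm : Measurable τ := hmeasτ τ hst
    calc ∫ ω, (M * P * τ ω +
          M * (y0 * Real.exp ((μ - σ ^ 2 / 2) * (T - t) + σ * (B T ω - B t ω))) * (T - τ ω)) ∂Pr
        ≤ ∫ ω, (M * P * T +
          (M * y0 * (T - t)) * Real.exp ((μ - σ ^ 2 / 2) * (T - t) + σ * (B T ω - B t ω))) ∂Pr := by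
          refine integral_mono_ae (hint y0 τ hy0 hτm hae)
            ((integrable_const _).add (hEint.const_mul _)) ?_
          filter_upwards [hae] with ω hω
          set e := Real.exp ((μ - σ ^ 2 / 2) * (T - t) + σ * (B T ω - B t ω)) with he_def
          have he : (0 : ℝ) ≤ e := (Real.exp_pos _).le
          have h0 : (0 : ℝ) ≤ M * (y0 * e) := mul_nonneg hM.le (mul_nonneg hy0 he)
          have h1 : M * P * τ ω ≤ M * P * T :=
            mul_le_mul_of_nonneg_left hω.2 (mul_nonneg hM.le hP.le)
          have h2 : M * (y0 * e) * (T - τ ω) ≤ M * y0 * (T - t) * e := by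
            calc M * (y0 * e) * (T - τ ω) ≤ M * (y0 * e) * (T - t) :=
                  mul_le_mul_of_nonneg_left (by linarith [hω.1]) h0
              _ = M * y0 * (T - t) * e := by ring
          exact add_le_add h1 h2
      _ = M * P * T + M * y0 * (T - t) * Real.exp (μ * (T - t)) := by
          rw [integral_add (integrable_const _) (hEint.const_mul _), integral_const,
            integral_const_mul, hEval]
          simp [measure_univ]
  simp only [V] at hstop ⊢
  -- refined upper bound for price y'
  have hb : ∀ x ∈ {x : ℝ | ∃ τ : Ω → ℝ, IsStoppingTime ℱ (fun ω => (τ ω : WithTop ℝ)) ∧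
      (∀ᵐ ω ∂Pr, t ≤ τ ω ∧ τ ω ≤ T) ∧
      x = ∫ ω, (M * P * τ ω +
        M * (y' * Real.exp ((μ - σ ^ 2 / 2) * (T - t) + σ * (B T ω - B t ω))) * (T - τ ω)) ∂Pr},
      x ≤ G M P μ T t y' := by
    rintro x ⟨τ, hst, hae, rfl⟩
    have hτm : Measurable τ := hmeasτ τ hst
    have hy'0 : (0 : ℝ) ≤ y' := le_trans hy.le hyy'
    have hIy := hint y τ hy.le hτm hae
    have hIy' := hint y' τ hy'0 hτm hae
    have hDI : Integrable (fun ω =>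
        M * ((y' - y) * Real.exp ((μ - σ ^ 2 / 2) * (T - t) + σ * (B T ω - B t ω)))
          * (T - τ ω)) Pr := by
      refine (hIy'.sub hIy).congr (Filter.Eventually.of_forall fun ω => ?_)
      simp only [Pi.sub_apply]
      ring
    have hsplit : ∫ ω, (M * P * τ ω +
          M * (y' * Real.exp ((μ - σ ^ 2 / 2) * (T - t) + σ * (B T ω - B t ω))) * (T - τ ω)) ∂Pr
        = (∫ ω, (M * P * τ ω +
            M * (y * Real.exp ((μ - σ ^ 2 / 2) * (T - t) + σ * (B T ω - B t ω))) * (T - τ ω)) ∂Pr)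
          + ∫ ω, (M * ((y' - y) * Real.exp ((μ - σ ^ 2 / 2) * (T - t) + σ * (B T ω - B t ω)))
            * (T - τ ω)) ∂Pr := by
      rw [← integral_add hIy hDI]
      congr 1
      funext ω
      ring
    have hDle : (∫ ω, (M * ((y' - y) * Real.exp ((μ - σ ^ 2 / 2) * (T - t) + σ * (B T ω - B t ω)))
          * (T - τ ω)) ∂Pr) ≤ M * (y' - y) * (T - t) * Real.exp (μ * (T - t)) := by
      calc (∫ ω, (M * ((y' - y) * Real.exp ((μ - σ ^ 2 / 2) * (T - t) + σ * (B T ω - B t ω)))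
              * (T - τ ω)) ∂Pr)
          ≤ ∫ ω, ((M * (y' - y) * (T - t))
              * Real.exp ((μ - σ ^ 2 / 2) * (T - t) + σ * (B T ω - B t ω))) ∂Pr := by
            refine integral_mono_ae hDI (hEint.const_mul _) ?_
            filter_upwards [hae] with ω hω
            set e := Real.exp ((μ - σ ^ 2 / 2) * (T - t) + σ * (B T ω - B t ω)) with he_def
            have he : (0 : ℝ) ≤ e := (Real.exp_pos _).le
            have h0 : (0 : ℝ) ≤ M * ((y' - y) * e) :=
              mul_nonneg hM.le (mul_nonneg (by linarith) he)
            calc M * ((y' - y) * e) * (T - τ ω) ≤ M * ((y' - y) * e) * (T - t) :=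
                  mul_le_mul_of_nonneg_left (by linarith [hω.1]) h0
              _ = M * (y' - y) * (T - t) * e := by ring
        _ = M * (y' - y) * (T - t) * Real.exp (μ * (T - t)) := by
            rw [integral_const_mul, hEval]
    have hbddy : BddAbove {x : ℝ | ∃ τ : Ω → ℝ, IsStoppingTime ℱ (fun ω => (τ ω : WithTop ℝ)) ∧
        (∀ᵐ ω ∂Pr, t ≤ τ ω ∧ τ ω ≤ T) ∧
        x = ∫ ω, (M * P * τ ω +
          M * (y * Real.exp ((μ - σ ^ 2 / 2) * (T - t) + σ * (B T ω - B t ω))) * (T - τ ω)) ∂Pr} :=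
      ⟨M * P * T + M * y * (T - t) * Real.exp (μ * (T - t)), fun x hx => hubcrude y hy.le x hx⟩
    have hxy : (∫ ω, (M * P * τ ω +
          M * (y * Real.exp ((μ - σ ^ 2 / 2) * (T - t) + σ * (B T ω - B t ω))) * (T - τ ω)) ∂Pr)
        ≤ G M P μ T t y := by
      rw [← hstop]
      exact le_csSup hbddy ⟨τ, hst, hae, rfl⟩
    have hGG : G M P μ T t y + M * (y' - y) * (T - t) * Real.exp (μ * (T - t))
        = G M P μ T t y' := by
      simp only [G]; ring
    rw [hsplit, ← hGG]
    exact add_le_add hxy hDle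
  -- membership of G t y' via the constant stopping time
  have hmem' : G M P μ T t y' ∈ {x : ℝ | ∃ τ : Ω → ℝ, IsStoppingTime ℱ (fun ω => (τ ω : WithTop ℝ)) ∧
      (∀ᵐ ω ∂Pr, t ≤ τ ω ∧ τ ω ≤ T) ∧
      x = ∫ ω, (M * P * τ ω +
        M * (y' * Real.exp ((μ - σ ^ 2 / 2) * (T - t) + σ * (B T ω - B t ω))) * (T - τ ω)) ∂Pr} :=
    ⟨fun _ => t, isStoppingTime_const ℱ t, ae_of_all _ fun ω => ⟨le_rfl, htT⟩, (hval y').symm⟩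
  exact le_antisymm (csSup_le ⟨_, hmem'⟩ hb) (le_csSup ⟨_, hb⟩ hmem')
end

section
/- For every fixed t ∈ [0,T], the map y ↦ V(t,y) − G(t,y) is nonincreasing (antitone) on (0,∞): if 0 < y ≤ y', then V(t,y') − G(t,y') ≤ V(t,y) − G(t,y). -/
open MeasureTheory ProbabilityTheory

open scoped NNReal ENNReal

lemma gaussian_pdf_mul_exp (v : ℝ≥0) (hv : v ≠ 0) (c x : ℝ) :
    gaussianPDFReal 0 v x * Real.exp (c * x)
      = Real.exp (c ^ 2 * v / 2) * gaussianPDFReal (c * v) v x := by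
  have hv' : (v : ℝ) ≠ 0 := by exact_mod_cast hv
  unfold gaussianPDFReal
  simp only [sub_zero]
  rw [mul_assoc, ← Real.exp_add]
  have : -x ^ 2 / (2 * v) + c * x = c ^ 2 * v / 2 + -(x - c * v) ^ 2 / (2 * v) := by
    field_simp
    ring
  rw [this, Real.exp_add]
  ring

lemma gaussian_mgf (v : ℝ≥0) (c : ℝ) :
    Integrable (fun x => Real.exp (c * x)) (gaussianReal 0 v) ∧
    ∫ x, Real.exp (c * x) ∂(gaussianReal 0 v) = Real.exp (c ^ 2 * v / 2) := by
  by_cases hv : v = 0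
  · subst hv
    constructor
    · refine (integrable_const (Real.exp (c * 0))).congr ?_
      simp only [gaussianReal_zero_var]
      exact (ae_eq_dirac' (by fun_prop : Measurable fun x => Real.exp (c * x))).symm
    · simp [gaussianReal_zero_var, integral_dirac]
  · have hgd : gaussianReal 0 v
        = volume.withDensity (fun x => ((Real.toNNReal (gaussianPDFReal 0 v x) : ℝ≥0) : ℝ≥0∞)) :=
      gaussianReal_of_var_ne_zero 0 hv
    have hmeas : Measurable (fun x => Real.toNNReal (gaussianPDFReal 0 v x)) :=
      (measurable_gaussianPDFReal 0 v).real_toNNReal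
    have hint : Integrable (fun x => Real.exp (c * x) * gaussianPDFReal 0 v x) volume := by
      refine ((integrable_gaussianPDFReal (c * v) v).const_mul (Real.exp (c ^ 2 * v / 2))).congr ?_
      refine ae_of_all _ fun x => ?_
      dsimp only
      linarith [gaussian_pdf_mul_exp v hv c x]
    constructor
    · rw [hgd, integrable_withDensity_iff (by exact_mod_cast hmeas.coe_nnreal_ennreal)
        (ae_of_all _ fun x => ENNReal.coe_lt_top)]
      refine hint.congr (ae_of_all _ fun x => ?_)
      simp [Real.coe_toNNReal _ (gaussianPDFReal_nonneg 0 v x)]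
    · rw [hgd, integral_withDensity_eq_integral_smul hmeas]
      have : ∀ x, Real.toNNReal (gaussianPDFReal 0 v x) • Real.exp (c * x)
          = Real.exp (c ^ 2 * v / 2) * gaussianPDFReal (c * v) v x := by
        intro x
        rw [NNReal.smul_def, smul_eq_mul, Real.coe_toNNReal _ (gaussianPDFReal_nonneg 0 v x),
          gaussian_pdf_mul_exp v hv c x]
      simp_rw [this]
      rw [integral_const_mul, integral_gaussianPDFReal_eq_one (c * v) hv, mul_one]

theorem stmt_6 {Ω : Type*} {mΩ : MeasurableSpace Ω}
    (Pr : Measure Ω) [IsProbabilityMeasure Pr] (ℱ : Filtration ℝ mΩ) (B : ℝ → Ω → ℝ)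
    (hB : IsStandardBM Pr ℱ B)
    (T M P σ μ : ℝ) (hT : 0 < T) (hM : 0 < M) (hP : 0 < P) (hσ : 0 < σ)
    (t : ℝ) (ht : t ∈ Set.Icc 0 T) :
    AntitoneOn (fun y => V Pr ℱ B M P σ μ T t y - G M P μ T t y) (Set.Ioi 0) := by
  obtain ⟨ht0, htT⟩ := ht
  intro y hy y' hy' hyy'
  simp only [Set.mem_Ioi] at hy hy'
  -- notation for the exponential factor
  set E : Ω → ℝ := fun ω => Real.exp ((μ - σ ^ 2 / 2) * (T - t) + σ * (B T ω - B t ω)) with hEdef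
  have hBm : ∀ s : ℝ, Measurable (B s) := fun s =>
    Measurable.mono (hB.adapted s) (ℱ.le s) le_rfl
  have hEm : Measurable E := by
    apply Measurable.exp
    exact measurable_const.add (((hBm T).sub (hBm t)).const_mul σ)
  have hEpos : ∀ ω, 0 < E ω := fun ω => Real.exp_pos _
  -- integral of E
  have hmap : Pr.map (fun ω => B T ω - B t ω) = gaussianReal 0 (Real.toNNReal (T - t)) :=
    hB.gauss t T ht0 htT
  have hTt : ((Real.toNNReal (T - t)) : ℝ) = T - t := Real.coe_toNNReal _ (by linarith)
  have hmgf := gaussian_mgf (Real.toNNReal (T - t)) σ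
  have hixp : Integrable (fun ω => Real.exp (σ * (B T ω - B t ω))) Pr := by
    have hexpm : Measurable fun x : ℝ => Real.exp (σ * x) := by fun_prop
    have h1 := hmgf.1
    rw [← hmap] at h1
    exact (integrable_map_measure hexpm.aestronglyMeasurable
      ((hBm T).sub (hBm t)).aemeasurable).mp h1
  have hixpval : ∫ ω, Real.exp (σ * (B T ω - B t ω)) ∂Pr = Real.exp (σ ^ 2 * (T - t) / 2) := by
    have h2 := hmgf.2
    have hexpm : Measurable fun x : ℝ => Real.exp (σ * x) := by fun_prop
    rw [← hmap, integral_map (φ := fun ω => B T ω - B t ω) ((hBm T).sub (hBm t)).aemeasurable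
      hexpm.aestronglyMeasurable] at h2
    rw [h2, hTt]
  have hEeq : ∀ ω, E ω = Real.exp ((μ - σ ^ 2 / 2) * (T - t)) * Real.exp (σ * (B T ω - B t ω)) :=
    fun ω => by rw [hEdef, ← Real.exp_add]
  have hEint : Integrable E Pr := by
    refine (hixp.const_mul (Real.exp ((μ - σ ^ 2 / 2) * (T - t)))).congr ?_
    exact ae_of_all _ fun ω => (hEeq ω).symm
  have hEval : ∫ ω, E ω ∂Pr = Real.exp (μ * (T - t)) := by
    calc ∫ ω, E ω ∂Pr
        = ∫ ω, Real.exp ((μ - σ ^ 2 / 2) * (T - t)) * Real.exp (σ * (B T ω - B t ω)) ∂Pr :=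
          integral_congr_ae (ae_of_all _ hEeq)
      _ = Real.exp ((μ - σ ^ 2 / 2) * (T - t)) * ∫ ω, Real.exp (σ * (B T ω - B t ω)) ∂Pr :=
          integral_const_mul _ _
      _ = Real.exp (μ * (T - t)) := by
          rw [hixpval, ← Real.exp_add]
          congr 1
          ring
  -- the admissible sets
  set S : ℝ → Set ℝ := fun z => {x : ℝ | ∃ τ : Ω → ℝ, IsStoppingTime ℱ (fun ω => (τ ω : WithTop ℝ)) ∧
    (∀ᵐ ω ∂Pr, t ≤ τ ω ∧ τ ω ≤ T) ∧
    x = ∫ ω, (M * P * τ ω + M * (z * E ω) * (T - τ ω)) ∂Pr} with hSdef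
  have hVS : ∀ z, V Pr ℱ B M P σ μ T t z = sSup (S z) := fun z => rfl
  -- integrability of the reward
  have hint : ∀ z : ℝ, 0 < z → ∀ τ : Ω → ℝ, Measurable τ →
      (∀ᵐ ω ∂Pr, t ≤ τ ω ∧ τ ω ≤ T) →
      Integrable (fun ω => M * P * τ ω + M * (z * E ω) * (T - τ ω)) Pr := by
    intro z hz τ hτm hae
    refine Integrable.mono ((integrable_const (M * P * T)).add (hEint.const_mul (M * z * (T - t))))
      ?_ ?_
    · exact ((((hτm.const_mul (M * P))).add
        ((hEm.const_mul z |>.const_mul M).mul (measurable_const.sub hτm))).stronglyMeasurable).aestronglyMeasurable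
    · filter_upwards [hae] with ω hω
      obtain ⟨h1, h2⟩ := hω
      have he := hEpos ω
      have hb : 0 < M * z * E ω := by positivity
      simp only [Pi.add_apply]
      rw [Real.norm_eq_abs, Real.norm_eq_abs, abs_of_nonneg, abs_of_nonneg]
      · nlinarith [mul_pos hM hP]
      · nlinarith [mul_pos hM hP]
      · nlinarith [mul_pos hM hP]
  -- upper bound for elements of S z
  have hbound : ∀ z : ℝ, 0 < z → ∀ x ∈ S z,
      x ≤ M * P * T + M * z * (T - t) * Real.exp (μ * (T - t)) := by
    intro z hz x hx
    obtain ⟨τ, hst, hae, rfl⟩ := hx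
    have hτm : Measurable τ := by
      have h := (hst.measurable.mono hst.measurableSpace_le le_rfl).untopD (0 : ℝ)
      simpa using h
    calc ∫ ω, (M * P * τ ω + M * (z * E ω) * (T - τ ω)) ∂Pr
        ≤ ∫ ω, (M * P * T + M * z * (T - t) * E ω) ∂Pr := by
          refine integral_mono_ae (hint z hz τ hτm hae)
            ((integrable_const (M * P * T)).add (hEint.const_mul (M * z * (T - t)))) ?_
          filter_upwards [hae] with ω hω
          obtain ⟨h1, h2⟩ := hω
          have he := hEpos ω
          nlinarith [mul_pos hM hP, mul_pos (mul_pos hM hz) he]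
      _ = M * P * T + M * z * (T - t) * Real.exp (μ * (T - t)) := by
          rw [integral_add (integrable_const _) (hEint.const_mul _), integral_const,
            integral_const_mul, hEval]
          simp
  have hBdd : ∀ z : ℝ, 0 < z → BddAbove (S z) := fun z hz =>
    ⟨_, fun x hx => hbound z hz x hx⟩
  -- nonemptiness
  have hne : ∀ z : ℝ, (S z).Nonempty := by
    intro z
    exact ⟨_, fun _ => t, isStoppingTime_const ℱ t,
      ae_of_all _ fun ω => ⟨le_rfl, htT⟩, rfl⟩
  -- the key estimate
  set C : ℝ := M * (y' - y) * (T - t) * Real.exp (μ * (T - t)) with hCdef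
  have hkey : ∀ x' ∈ S y', x' ≤ V Pr ℱ B M P σ μ T t y + C := by
    intro x' hx'
    obtain ⟨τ, hst, hae, rfl⟩ := hx'
    have hτm : Measurable τ := by
      have h := (hst.measurable.mono hst.measurableSpace_le le_rfl).untopD (0 : ℝ)
      simpa using h
    have hx : (∫ ω, (M * P * τ ω + M * (y * E ω) * (T - τ ω)) ∂Pr) ∈ S y :=
      ⟨τ, hst, hae, rfl⟩
    have h1 : (∫ ω, (M * P * τ ω + M * (y' * E ω) * (T - τ ω)) ∂Pr)
        ≤ (∫ ω, (M * P * τ ω + M * (y * E ω) * (T - τ ω)) ∂Pr) + C := by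
      have hle : ∫ ω, (M * P * τ ω + M * (y' * E ω) * (T - τ ω)) ∂Pr
          ≤ ∫ ω, ((M * P * τ ω + M * (y * E ω) * (T - τ ω))
              + (M * (y' - y) * (T - t)) * E ω) ∂Pr := by
        refine integral_mono_ae (hint y' hy' τ hτm hae)
          ((hint y hy τ hτm hae).add (hEint.const_mul _)) ?_
        filter_upwards [hae] with ω hω
        obtain ⟨hω1, hω2⟩ := hω
        have he := hEpos ω
        nlinarith [mul_nonneg (mul_nonneg (mul_nonneg hM.le (sub_nonneg.2 hyy')) he.le)
          (sub_nonneg.2 hω1)]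
      rw [integral_add (hint y hy τ hτm hae) (hEint.const_mul _), integral_const_mul,
        hEval] at hle
      calc (∫ ω, (M * P * τ ω + M * (y' * E ω) * (T - τ ω)) ∂Pr)
          ≤ (∫ ω, (M * P * τ ω + M * (y * E ω) * (T - τ ω)) ∂Pr)
            + M * (y' - y) * (T - t) * Real.exp (μ * (T - t)) := by linarith
        _ = _ := by rw [hCdef]
    have h2 : (∫ ω, (M * P * τ ω + M * (y * E ω) * (T - τ ω)) ∂Pr)
        ≤ V Pr ℱ B M P σ μ T t y := by
      rw [hVS]
      exact le_csSup (hBdd y hy) hx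
    linarith
  have hmain : V Pr ℱ B M P σ μ T t y' ≤ V Pr ℱ B M P σ μ T t y + C := by
    rw [hVS]
    exact csSup_le (hne y') hkey
  have hG : G M P μ T t y' - G M P μ T t y = C := by
    rw [hCdef]
    simp only [G]
    ring
  simp only
  linarith
end

section
/- For every fixed t ∈ [0,T], the continuation section C_t := {y ∈ (0,∞) : V(t,y) > G(t,y)} is an open subset of ℝ, and the stopping section D_t := {y ∈ (0,∞) : V(t,y) = G(t,y)} is closed in (0,∞). -/
open MeasureTheory ProbabilityTheory
open scoped NNReal

lemma my_integrable_exp_mul_gaussianReal (a : ℝ) (v : ℝ≥0) :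
    Integrable (fun x => Real.exp (a * x)) (gaussianReal 0 v) := by
  by_cases hv : v = 0
  · rw [hv, gaussianReal_zero_var]
    exact (integrable_const _).congr (MeasureTheory.ae_eq_dirac fun x => Real.exp (a * x)).symm
  · have hv0 : (0 : ℝ) < (v : ℝ) := by exact_mod_cast zero_lt_iff.mpr hv
    rw [gaussianReal_of_var_ne_zero _ hv,
      integrable_withDensity_iff (measurable_gaussianPDF _ _)
        (ae_of_all _ fun x => ENNReal.ofReal_lt_top)]
    have key : ∀ x : ℝ, Real.exp (a * x) * (ENNReal.ofReal (gaussianPDFReal 0 v x)).toReal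
        = ((Real.sqrt (2 * Real.pi * v))⁻¹ * Real.exp (a ^ 2 * v / 2)) *
          Real.exp (-(2 * (v : ℝ))⁻¹ * (x - a * v) ^ 2) := by
      intro x
      rw [ENNReal.toReal_ofReal (gaussianPDFReal_nonneg _ _ _), gaussianPDFReal]
      have harg : a * x + (-(x - 0) ^ 2 / (2 * (v : ℝ)))
          = a ^ 2 * v / 2 + (-(2 * (v : ℝ))⁻¹ * (x - a * v) ^ 2) := by
        field_simp
        ring
      calc Real.exp (a * x) * ((Real.sqrt (2 * Real.pi * v))⁻¹
              * Real.exp (-(x - 0) ^ 2 / (2 * (v : ℝ))))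
          = (Real.sqrt (2 * Real.pi * v))⁻¹
              * Real.exp (a * x + (-(x - 0) ^ 2 / (2 * (v : ℝ)))) := by
            rw [Real.exp_add]; ring
        _ = _ := by rw [harg, Real.exp_add]; ring
    have h1 : Integrable (fun x : ℝ =>
        ((Real.sqrt (2 * Real.pi * v))⁻¹ * Real.exp (a ^ 2 * v / 2)) *
          Real.exp (-(2 * (v : ℝ))⁻¹ * (x - a * v) ^ 2)) :=
      ((integrable_exp_neg_mul_sq (by positivity : (0 : ℝ) < (2 * (v : ℝ))⁻¹)).comp_sub_right
        (a * (v : ℝ))).const_mul _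
    exact h1.congr (ae_of_all _ fun x => (key x).symm)

theorem stmt_12 {Ω : Type*} {mΩ : MeasurableSpace Ω}
    (Pr : Measure Ω) [IsProbabilityMeasure Pr] (ℱ : Filtration ℝ mΩ) (B : ℝ → Ω → ℝ)
    (hB : IsStandardBM Pr ℱ B)
    (T M P σ μ : ℝ) (hT : 0 < T) (hM : 0 < M) (hP : 0 < P) (hσ : 0 < σ)
    (t : ℝ) (ht : t ∈ Set.Icc 0 T) :
    IsOpen {y : ℝ | y ∈ Set.Ioi (0 : ℝ) ∧ G M P μ T t y < V Pr ℱ B M P σ μ T t y} ∧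
    IsClosed {y : Set.Ioi (0 : ℝ) | V Pr ℱ B M P σ μ T t ↑y = G M P μ T t ↑y} := by
  obtain ⟨ht0, htT⟩ := ht
  -- the exponential factor
  set g : Ω → ℝ :=
    fun ω => Real.exp ((μ - σ ^ 2 / 2) * (T - t) + σ * (B T ω - B t ω)) with hgdef
  set S : ℝ → Set ℝ := fun y => {x : ℝ | ∃ τ : Ω → ℝ, IsStoppingTime ℱ (fun ω => (τ ω : WithTop ℝ)) ∧
    (∀ᵐ ω ∂Pr, t ≤ τ ω ∧ τ ω ≤ T) ∧
    x = ∫ ω, (M * P * τ ω + M * (y * g ω) * (T - τ ω)) ∂Pr} with hSdef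
  have hV : ∀ y, V Pr ℱ B M P σ μ T t y = sSup (S y) := fun _ => rfl
  have hBTm : Measurable (B T) := (hB.adapted T).mono (ℱ.le T) le_rfl
  have hBtm : Measurable (B t) := (hB.adapted t).mono (ℱ.le t) le_rfl
  have hXm : Measurable fun ω => B T ω - B t ω := hBTm.sub hBtm
  have hgmeas : Measurable g := by
    apply Real.measurable_exp.comp
    exact measurable_const.add (hXm.const_mul σ)
  -- integrability of g
  have hexpInt : Integrable (fun ω => Real.exp (σ * (B T ω - B t ω))) Pr := by
    have h1 : Integrable (fun x => Real.exp (σ * x))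
        (Pr.map fun ω => B T ω - B t ω) := by
      rw [hB.gauss t T ht0 htT]
      exact my_integrable_exp_mul_gaussianReal σ _
    exact (integrable_map_measure
      (Real.measurable_exp.comp (measurable_const_mul σ)).aestronglyMeasurable
      hXm.aemeasurable).mp h1
  have hgInt : Integrable g Pr := by
    have : g = fun ω => Real.exp ((μ - σ ^ 2 / 2) * (T - t))
        * Real.exp (σ * (B T ω - B t ω)) := funext fun ω => Real.exp_add _ _
    rw [this]
    exact hexpInt.const_mul _
  set K : ℝ := ∫ ω, g ω ∂Pr with hKdef
  have hK0 : 0 ≤ K := integral_nonneg fun ω => (Real.exp_pos _).le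
  set C : ℝ := M * (T - t) * K with hCdef
  have hTt : 0 ≤ T - t := sub_nonneg.mpr htT
  have hC0 : 0 ≤ C := by positivity
  -- key structural decomposition
  have hkey : ∀ ⦃y x : ℝ⦄, x ∈ S y → ∃ A Bc : ℝ, x = A + y * Bc ∧ A ≤ M * P * T ∧
      |Bc| ≤ C ∧ ∀ y', A + y' * Bc ∈ S y' := by
    rintro y x ⟨τ, hst, hbd, hx⟩
    have hτmeas : Measurable τ := by have := (hst.measurable.mono hst.measurableSpace_le le_rfl).untopD 0; exact this
    have hf1 : Integrable (fun ω => M * P * τ ω) Pr := by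
      refine Integrable.mono' (integrable_const (M * P * T))
        ((hτmeas.const_mul (M * P)).aestronglyMeasurable) ?_
      filter_upwards [hbd] with ω hω
      rw [Real.norm_eq_abs, abs_mul, abs_of_pos (by positivity : (0:ℝ) < M * P)]
      have hτa : |τ ω| ≤ T := abs_le.mpr ⟨by linarith [hω.1], hω.2⟩
      exact mul_le_mul_of_nonneg_left hτa (by positivity)
    have hf2 : Integrable (fun ω => M * g ω * (T - τ ω)) Pr := by
      refine Integrable.mono' (hgInt.const_mul (M * (T - t)))
        (((hgmeas.const_mul M).mul (measurable_const.sub hτmeas)).aestronglyMeasurable) ?_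
      filter_upwards [hbd] with ω hω
      rw [Real.norm_eq_abs, abs_mul, abs_mul,
        abs_of_pos hM, abs_of_pos (Real.exp_pos _ : (0:ℝ) < g ω)]
      have h1 : |T - τ ω| ≤ T - t := abs_le.mpr ⟨by linarith [hω.2], by linarith [hω.1]⟩
      calc M * g ω * |T - τ ω| ≤ M * g ω * (T - t) :=
            mul_le_mul_of_nonneg_left h1 (mul_nonneg hM.le (Real.exp_pos _).le)
        _ = M * (T - t) * g ω := by ring
    have heq : ∀ y', (∫ ω, (M * P * τ ω + M * (y' * g ω) * (T - τ ω)) ∂Pr)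
        = (∫ ω, M * P * τ ω ∂Pr) + y' * ∫ ω, M * g ω * (T - τ ω) ∂Pr := by
      intro y'
      have hre : (fun ω => M * P * τ ω + M * (y' * g ω) * (T - τ ω))
          = fun ω => M * P * τ ω + y' * (M * g ω * (T - τ ω)) := by
        funext ω; ring
      rw [hre, integral_add hf1 (hf2.const_mul y'), integral_const_mul y']
    refine ⟨∫ ω, M * P * τ ω ∂Pr, ∫ ω, M * g ω * (T - τ ω) ∂Pr, ?_, ?_, ?_, ?_⟩
    · rw [hx, heq y]
    · calc (∫ ω, M * P * τ ω ∂Pr) ≤ ∫ _, M * P * T ∂Pr :=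
            integral_mono_ae hf1 (integrable_const _)
              (hbd.mono fun ω hω => mul_le_mul_of_nonneg_left hω.2 (by positivity))
        _ = M * P * T := by simp
    · calc |∫ ω, M * g ω * (T - τ ω) ∂Pr| ≤ ∫ ω, ‖M * g ω * (T - τ ω)‖ ∂Pr :=
            by rw [← Real.norm_eq_abs]; exact norm_integral_le_integral_norm _
        _ ≤ ∫ ω, M * (T - t) * g ω ∂Pr := by
            refine integral_mono_ae hf2.norm (hgInt.const_mul _) ?_
            filter_upwards [hbd] with ω hω
            rw [Real.norm_eq_abs, abs_mul, abs_mul, abs_of_pos hM,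
              abs_of_pos (Real.exp_pos _ : (0:ℝ) < g ω)]
            have h1 : |T - τ ω| ≤ T - t := abs_le.mpr ⟨by linarith [hω.2], by linarith [hω.1]⟩
            calc M * g ω * |T - τ ω| ≤ M * g ω * (T - t) :=
                  mul_le_mul_of_nonneg_left h1 (mul_nonneg hM.le (Real.exp_pos _).le)
              _ = M * (T - t) * g ω := by ring
        _ = C := by rw [integral_const_mul]
    · intro y'
      exact ⟨τ, hst, hbd, (heq y').symm⟩
  have hne : ∀ y, (S y).Nonempty := by
    intro y
    exact ⟨_, fun _ => t, isStoppingTime_const ℱ t,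
      ae_of_all _ fun ω => ⟨le_rfl, htT⟩, rfl⟩
  have hbdd : ∀ y, BddAbove (S y) := by
    intro y
    refine ⟨M * P * T + |y| * C, fun x hx => ?_⟩
    obtain ⟨A, Bc, rfl, hA, hBc, -⟩ := hkey hx
    have : y * Bc ≤ |y| * C := by
      calc y * Bc ≤ |y * Bc| := le_abs_self _
        _ = |y| * |Bc| := abs_mul _ _
        _ ≤ |y| * C := mul_le_mul_of_nonneg_left hBc (abs_nonneg _)
    linarith
  have hlip : ∀ y y', sSup (S y) ≤ sSup (S y') + C * |y - y'| := by
    intro y y'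
    refine csSup_le (hne y) ?_
    rintro x hx
    obtain ⟨A, Bc, rfl, hA, hBc, hmem⟩ := hkey hx
    have h1 : A + y' * Bc ≤ sSup (S y') := le_csSup (hbdd y') (hmem y')
    have h2 : y * Bc - y' * Bc ≤ C * |y - y'| := by
      calc y * Bc - y' * Bc = (y - y') * Bc := by ring
        _ ≤ |(y - y') * Bc| := le_abs_self _
        _ = |y - y'| * |Bc| := abs_mul _ _
        _ ≤ |y - y'| * C := mul_le_mul_of_nonneg_left hBc (abs_nonneg _)
        _ = C * |y - y'| := mul_comm _ _
    linarith
  have hVcont : Continuous (fun y => V Pr ℱ B M P σ μ T t y) := by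
    have hL : LipschitzWith (Real.toNNReal C) (fun y => V Pr ℱ B M P σ μ T t y) := by
      refine LipschitzWith.of_dist_le_mul fun y y' => ?_
      rw [Real.dist_eq, Real.dist_eq, hV y, hV y', Real.coe_toNNReal C hC0]
      have e1 := hlip y y'
      have e2 := hlip y' y
      rw [abs_sub_comm y' y] at e2
      exact abs_le.mpr ⟨by linarith, by linarith⟩
    exact hL.continuous
  have hGcont : Continuous (fun y => G M P μ T t y) := by
    unfold G; fun_prop
  constructor
  · exact isOpen_Ioi.inter (isOpen_lt hGcont hVcont)
  · exact isClosed_eq (hVcont.comp continuous_subtype_val) (hGcont.comp continuous_subtype_val)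
end
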